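/- For any inner function u, D_u D_u^* = I − (1 − |u(0)|^2)·(u ⊗ u), where u ⊗ u is the rank-one operator f ↦ ⟨f, u⟩u on K_u^⊥. -/

import Mathlib

open MeasureTheory Complex AddCircle

noncomputable section

namespace Paper

/-- The period `2π`. -/
abbrev T : ℝ := 2 * Real.pi

instance : Fact (0 < T) := ⟨by positivity⟩

/-- Normalized Lebesgue (Haar) measure on the circle. -/
abbrev μ : Measure (AddCircle T) := haarAddCircle

/-- The space `L²(𝕋, dm)`. -/
abbrev L2 : Type := Lp ℂ 2 μ

lemma memLp_mul {u : AddCircle T → ℂ} (hm : AEStronglyMeasurable u μ)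
    (hb : ∀ᵐ x ∂μ, ‖u x‖ ≤ 1) (f : L2) :
    MemLp (fun x => u x * (f : AddCircle T → ℂ) x) 2 μ := by
  refine (Lp.memLp f).of_le (hm.mul (Lp.aestronglyMeasurable f)) ?_
  filter_upwards [hb] with x hx
  calc ‖u x * (f : AddCircle T → ℂ) x‖ = ‖u x‖ * ‖(f : AddCircle T → ℂ) x‖ := norm_mul _ _
    _ ≤ 1 * ‖(f : AddCircle T → ℂ) x‖ := by gcongr
    _ = ‖(f : AddCircle T → ℂ) x‖ := one_mul _

/-- Multiplication by a measurable function bounded by `1`, as a bounded operator on `L²`. -/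
def mulCLM (u : AddCircle T → ℂ) (hm : AEStronglyMeasurable u μ)
    (hb : ∀ᵐ x ∂μ, ‖u x‖ ≤ 1) : L2 →L[ℂ] L2 :=
  LinearMap.mkContinuous
    { toFun := fun f => (memLp_mul hm hb f).toLp _
      map_add' := fun f g => by
        show MemLp.toLp _ (memLp_mul hm hb (f + g)) = _
        have h : (fun x => u x * ((f + g : L2) : AddCircle T → ℂ) x)
            =ᵐ[μ] (fun x => u x * (f : AddCircle T → ℂ) x)
              + (fun x => u x * (g : AddCircle T → ℂ) x) := by
          filter_upwards [Lp.coeFn_add f g] with x hx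
          simp only [Pi.add_apply, hx, mul_add]
        rw [MemLp.toLp_congr (memLp_mul hm hb (f + g))
          ((memLp_mul hm hb f).add (memLp_mul hm hb g)) h, MemLp.toLp_add]
      map_smul' := fun c f => by
        have h : (fun x => u x * ((c • f : L2) : AddCircle T → ℂ) x)
            =ᵐ[μ] c • (fun x => u x * (f : AddCircle T → ℂ) x) := by
          filter_upwards [Lp.coeFn_smul c f] with x hx
          simp only [Pi.smul_apply, hx, smul_eq_mul]
          ring
        simp only [RingHom.id_apply]
        rw [MemLp.toLp_congr (memLp_mul hm hb (c • f))
          ((memLp_mul hm hb f).const_smul c) h, MemLp.toLp_const_smul] }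
    1
    (fun f => by
      simp only [LinearMap.coe_mk, AddHom.coe_mk, one_mul]
      rw [Lp.norm_toLp]
      have h1 : eLpNorm (fun x => u x * (f : AddCircle T → ℂ) x) 2 μ
          ≤ eLpNorm (f : AddCircle T → ℂ) 2 μ := by
        refine eLpNorm_mono_ae ?_
        filter_upwards [hb] with x hx
        calc ‖u x * (f : AddCircle T → ℂ) x‖
            = ‖u x‖ * ‖(f : AddCircle T → ℂ) x‖ := norm_mul _ _
          _ ≤ 1 * ‖(f : AddCircle T → ℂ) x‖ := by gcongr
          _ = ‖(f : AddCircle T → ℂ) x‖ := one_mul _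
      calc (eLpNorm (fun x => u x * (f : AddCircle T → ℂ) x) 2 μ).toReal
          ≤ (eLpNorm (f : AddCircle T → ℂ) 2 μ).toReal :=
            ENNReal.toReal_mono (Lp.eLpNorm_ne_top f) h1
        _ = ‖f‖ := (Lp.norm_def f).symm)

lemma memLp_conj (f : L2) :
    MemLp (fun x => (starRingEnd ℂ) ((f : AddCircle T → ℂ) x)) 2 μ := by
  refine (Lp.memLp f).of_le ?_ ?_
  · exact Complex.continuous_conj.comp_aestronglyMeasurable (Lp.aestronglyMeasurable f)
  · filter_upwards with x
    simp

/-- Complex conjugation on `L²`. -/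
def conjL2 (f : L2) : L2 := (memLp_conj f).toLp _

/-- The independent variable `z = e^{iθ}` as a function on the circle. -/
def zfun : AddCircle T → ℂ := fun x => fourier 1 x

lemma zfun_meas : AEStronglyMeasurable zfun μ :=
  ((map_continuous (fourier (T := T) 1)).aestronglyMeasurable)

lemma zfun_norm : ∀ᵐ x ∂μ, ‖zfun x‖ ≤ 1 := by
  filter_upwards with x
  simp [zfun, Circle.norm_coe]

/-- Multiplication by `z` (the bilateral shift `M` on `L²`). -/
def Mz : L2 →L[ℂ] L2 := mulCLM zfun zfun_meas zfun_norm

/-- Multiplication by `conj z`. -/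
def Mzbar : L2 →L[ℂ] L2 :=
  mulCLM (fun x => (starRingEnd ℂ) (zfun x))
    (Complex.continuous_conj.comp_aestronglyMeasurable zfun_meas)
    (by filter_upwards with x; simp [zfun, Circle.norm_coe])

/-- The Hardy space `H² = {f ∈ L² : f̂(n) = 0 for all n < 0}`. -/
def H2 : Submodule ℂ L2 where
  carrier := {f | ∀ n : ℤ, n < 0 → fourierBasis.repr f n = 0}
  add_mem' := by
    intro f g hf hg n hn
    simp [map_add, hf n hn, hg n hn]
  zero_mem' := by intro n hn; simp
  smul_mem' := by
    intro c f hf n hn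
    simp [_root_.map_smul, hf n hn]

lemma continuous_coeff (n : ℤ) :
    Continuous fun f : L2 => fourierBasis.repr f n := by
  rw [Metric.continuous_iff]
  intro f ε hε
  refine ⟨ε, hε, fun g hg => ?_⟩
  have h1 : fourierBasis.repr g n - fourierBasis.repr f n = fourierBasis.repr (g - f) n := by
    simp [map_sub]
  have h2 : ‖fourierBasis.repr (g - f) n‖ ≤ ‖fourierBasis.repr (g - f)‖ :=
    lp.norm_apply_le_norm (by norm_num) _ n
  have h3 : ‖fourierBasis.repr (g - f)‖ = ‖g - f‖ :=
    fourierBasis.repr.norm_map _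
  calc dist (fourierBasis.repr g n) (fourierBasis.repr f n)
      = ‖fourierBasis.repr (g - f) n‖ := by rw [dist_eq_norm, h1]
    _ ≤ ‖g - f‖ := by rw [← h3]; exact h2
    _ = dist g f := (dist_eq_norm g f).symm
    _ < ε := hg

lemma H2_isClosed : IsClosed (H2 : Set L2) := by
  have : (H2 : Set L2) =
      ⋂ n ∈ {m : ℤ | m < 0}, {f : L2 | fourierBasis.repr f n = 0} := by
    ext f
    simp only [Set.mem_iInter, Set.mem_setOf_eq]
    rfl
  rw [this]
  exact isClosed_biInter fun n _ => isClosed_eq (continuous_coeff n) continuous_const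

instance : CompleteSpace H2 := H2_isClosed.completeSpace_coe

/-- The Riesz projection `P⁺` of `L²` onto `H²`. -/
def Pp : L2 →L[ℂ] L2 := H2.subtypeL ∘L H2.orthogonalProjectionOnto

/-- The projection `P⁻ = I − P⁺` of `L²` onto `conj(H²₀)`. -/
def Pm : L2 →L[ℂ] L2 := ContinuousLinearMap.id ℂ L2 - Pp

/-- `conj(H²₀) = {f ∈ L² : f̂(n) = 0 for all n ≥ 0}`, the orthogonal complement of `H²`. -/
def Hm : Submodule ℂ L2 where
  carrier := {f | ∀ n : ℤ, 0 ≤ n → fourierBasis.repr f n = 0}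
  add_mem' := by
    intro f g hf hg n hn
    simp [map_add, hf n hn, hg n hn]
  zero_mem' := by intro n hn; simp
  smul_mem' := by
    intro c f hf n hn
    simp [_root_.map_smul, hf n hn]

/-- The constant function `1` as an element of `L²`. -/
def oneL2 : L2 := (memLp_const (1 : ℂ)).toLp _

/-- An inner function: a bounded measurable unimodular function on the circle whose
negative Fourier coefficients vanish. -/
structure InnerData where
  u : AddCircle T → ℂ
  meas : AEStronglyMeasurable u μ
  unim : ∀ᵐ x ∂μ, ‖u x‖ = 1
  anal : ∀ n : ℤ, n < 0 → fourierCoeff u n = 0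

namespace InnerData

variable (U : InnerData)

lemma bd : ∀ᵐ x ∂μ, ‖U.u x‖ ≤ 1 := by
  filter_upwards [U.unim] with x hx
  rw [hx]

/-- Multiplication by `u`: the operator `M_u` on `L²`. -/
def M : L2 →L[ℂ] L2 := mulCLM U.u U.meas U.bd

/-- Multiplication by `conj u`: the operator `M_{conj u}` on `L²`. -/
def Mc : L2 →L[ℂ] L2 :=
  mulCLM (fun x => (starRingEnd ℂ) (U.u x))
    (Complex.continuous_conj.comp_aestronglyMeasurable U.meas)
    (by filter_upwards [U.bd] with x hx; simpa using hx)

/-- `u` as an element of `L²`. -/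
def toL2 : L2 :=
  (memLp_top_of_bound U.meas 1 U.bd |>.mono_exponent le_top).toLp _

/-- The value `u(0)` of (the analytic extension of) `u` at the origin, i.e. the mean of `u`. -/
def a0 : ℂ := fourierCoeff U.u 0

/-- The subspace `uH²`. -/
def uH2 : Submodule ℂ L2 := Submodule.map (U.M : L2 →ₗ[ℂ] L2) H2

/-- The model space `K_u = H² ∩ (uH²)ᗮ`. -/
def Ku : Submodule ℂ L2 := H2 ⊓ (U.uH2)ᗮ

lemma Ku_isClosed : IsClosed (U.Ku : Set L2) := by
  have : (U.Ku : Set L2) = (H2 : Set L2) ∩ ((U.uH2)ᗮ : Set L2) := rfl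
  rw [this]
  exact H2_isClosed.inter (U.uH2).isClosed_orthogonal

instance : CompleteSpace U.Ku := U.Ku_isClosed.completeSpace_coe

/-- `K_u^⊥`, the orthogonal complement of the model space in `L²`. -/
def KP : Submodule ℂ L2 := (U.Ku)ᗮ

instance : CompleteSpace U.KP := (U.Ku).isClosed_orthogonal.completeSpace_coe

/-- The orthogonal projection `P_u : L² → K_u` (viewed as an operator on `L²`). -/
def Pu : L2 →L[ℂ] L2 := (U.Ku).subtypeL ∘L (U.Ku).orthogonalProjectionOnto

/-- The dual of the compressed shift: `D_u = (I − P_u) M_z |_{K_u^⊥}`. -/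
def Du : U.KP →L[ℂ] U.KP :=
  (U.KP).orthogonalProjectionOnto ∘L Mz ∘L (U.KP).subtypeL

/-- The conjugation `C_u f = u · conj(z f)` on `L²`. -/
def C (f : L2) : L2 := U.M (conjL2 (Mz f))

/-- The reproducing kernel of `K_u` at `0`: `k₀ᵘ = 1 − conj(u(0))·u`. -/
def k0 : L2 := oneL2 - (starRingEnd ℂ) U.a0 • U.toL2

/-- The similarity `V_u = P⁻ + (conj u/conj u(0)) P⁺` of the paper. -/
def V : L2 →L[ℂ] L2 := Pm + ((starRingEnd ℂ) U.a0)⁻¹ • (U.Mc ∘L Pp)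

/-- The inverse similarity `V_u⁻¹ = P⁻ + conj(u(0)) u P⁺`. -/
def Vinv : L2 →L[ℂ] L2 := Pm + (starRingEnd ℂ) U.a0 • (U.M ∘L Pp)

end InnerData

lemma Mz_mem_H2 {f : L2} (hf : f ∈ H2) : Mz f ∈ H2 := by
  intro n hn
  rw [fourierBasis_repr]
  have hcoe : (Mz f : AddCircle T → ℂ) =ᵐ[μ] fun x => zfun x * (f : AddCircle T → ℂ) x :=
    MemLp.coeFn_toLp (memLp_mul zfun_meas zfun_norm f)
  have h1 : fourierCoeff (Mz f : AddCircle T → ℂ) n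
      = fourierCoeff (f : AddCircle T → ℂ) (n - 1) := by
    unfold fourierCoeff
    rw [integral_congr_ae (by filter_upwards [hcoe] with x hx; rw [hx])]
    refine integral_congr_ae ?_
    filter_upwards with x
    have : fourier (-n) x * zfun x = fourier (-(n - 1)) x := by
      unfold zfun
      rw [show (-(n - 1) : ℤ) = -n + 1 by ring, fourier_add]
    simp only [smul_eq_mul]
    calc fourier (-n) x * (zfun x * (f : AddCircle T → ℂ) x)
        = (fourier (-n) x * zfun x) * (f : AddCircle T → ℂ) x := by ring
      _ = fourier (-(n - 1)) x * (f : AddCircle T → ℂ) x := by rw [this]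
  rw [h1]
  have := hf (n - 1) (by omega)
  rwa [fourierBasis_repr] at this

/-- The unilateral shift `S` on `H²`. -/
def Shift : H2 →L[ℂ] H2 :=
  (Mz ∘L H2.subtypeL).codRestrict H2 (fun x => Mz_mem_H2 x.2)

/-! ### Auxiliary machinery for Statement 9 -/

local notation "⟪" x ", " y "⟫" => @inner ℂ _ _ x y

lemma inner_L2 (f g : L2) :
    ⟪f, g⟫ = ∫ x, (starRingEnd ℂ) ((f : AddCircle T → ℂ) x) * (g : AddCircle T → ℂ) x ∂μ := by
  rw [MeasureTheory.L2.inner_def]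
  simp_rw [RCLike.inner_apply]
  exact integral_congr_ae (Filter.Eventually.of_forall fun x => mul_comm _ _)

lemma fourierCoeff_congr_ae {f g : AddCircle T → ℂ} (h : f =ᵐ[μ] g) (n : ℤ) :
    fourierCoeff f n = fourierCoeff g n := by
  unfold fourierCoeff
  exact integral_congr_ae (by filter_upwards [h] with x hx; rw [hx])

lemma coeFn_mulCLM (u : AddCircle T → ℂ) (hm : AEStronglyMeasurable u μ)
    (hb : ∀ᵐ x ∂μ, ‖u x‖ ≤ 1) (f : L2) :
    (mulCLM u hm hb f : AddCircle T → ℂ) =ᵐ[μ] fun x => u x * (f : AddCircle T → ℂ) x :=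
  MemLp.coeFn_toLp (memLp_mul hm hb f)

lemma coeFn_Mz (f : L2) :
    (Mz f : AddCircle T → ℂ) =ᵐ[μ] fun x => fourier 1 x * (f : AddCircle T → ℂ) x :=
  coeFn_mulCLM _ _ _ f

lemma coeFn_Mzbar (f : L2) :
    (Mzbar f : AddCircle T → ℂ)
      =ᵐ[μ] fun x => (starRingEnd ℂ) (fourier 1 x) * (f : AddCircle T → ℂ) x :=
  coeFn_mulCLM _ _ _ f

lemma coeFn_one : ((oneL2 : L2) : AddCircle T → ℂ) =ᵐ[μ] fun _ => (1 : ℂ) :=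
  MemLp.coeFn_toLp _

lemma fourier_one_mul_conj (x : AddCircle T) :
    fourier 1 x * (starRingEnd ℂ) (fourier 1 x) = 1 := by
  rw [← fourier_neg, ← fourier_add]
  norm_num

lemma Mz_Mzbar (f : L2) : Mz (Mzbar f) = f := by
  apply Lp.ext
  filter_upwards [coeFn_Mz (Mzbar f), coeFn_Mzbar f] with x h1 h2
  rw [h1, h2, ← mul_assoc, fourier_one_mul_conj, one_mul]

lemma Mz_inner (f g : L2) : ⟪Mz f, g⟫ = ⟪f, Mzbar g⟫ := by
  rw [inner_L2, inner_L2]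
  refine integral_congr_ae ?_
  filter_upwards [coeFn_Mz f, coeFn_Mzbar g] with x h1 h2
  rw [h1, h2, map_mul]
  ring

lemma Mz_adjoint : ContinuousLinearMap.adjoint Mz = Mzbar := by
  symm
  rw [ContinuousLinearMap.eq_adjoint_iff]
  intro x y
  calc ⟪Mzbar x, y⟫ = (starRingEnd ℂ) ⟪y, Mzbar x⟫ := (inner_conj_symm _ _).symm
    _ = (starRingEnd ℂ) ⟪Mz y, x⟫ := by rw [Mz_inner]
    _ = ⟪x, Mz y⟫ := inner_conj_symm _ _

lemma fourierCoeff_fourier_mul (k n : ℤ) (g : AddCircle T → ℂ) :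
    fourierCoeff (fun x => fourier k x * g x) n = fourierCoeff g (n - k) := by
  unfold fourierCoeff
  refine integral_congr_ae (Filter.Eventually.of_forall fun x => ?_)
  simp only [smul_eq_mul, ← mul_assoc, ← fourier_add]
  have h : (-n + k : ℤ) = -(n - k) := by ring
  rw [h]

lemma fourierCoeff_conj (f : AddCircle T → ℂ) (n : ℤ) :
    fourierCoeff (fun x => (starRingEnd ℂ) (f x)) n
      = (starRingEnd ℂ) (fourierCoeff f (-n)) := by
  unfold fourierCoeff
  rw [← integral_conj]
  refine integral_congr_ae (Filter.Eventually.of_forall fun x => ?_)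
  simp only [smul_eq_mul, map_mul, neg_neg]
  rw [← fourier_neg]

lemma repr_Mz (f : L2) (n : ℤ) :
    fourierBasis.repr (Mz f) n = fourierBasis.repr f (n - 1) := by
  rw [fourierBasis_repr, fourierBasis_repr, fourierCoeff_congr_ae (coeFn_Mz f),
    fourierCoeff_fourier_mul]

lemma repr_Mzbar (f : L2) (n : ℤ) :
    fourierBasis.repr (Mzbar f) n = fourierBasis.repr f (n + 1) := by
  have h : (Mzbar f : AddCircle T → ℂ)
      =ᵐ[μ] fun x => fourier (-1) x * (f : AddCircle T → ℂ) x := by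
    filter_upwards [coeFn_Mzbar f] with x hx
    rw [hx, fourier_neg]
  rw [fourierBasis_repr, fourierBasis_repr, fourierCoeff_congr_ae h,
    fourierCoeff_fourier_mul]
  norm_num

lemma oneL2_eq : oneL2 = fourierBasis (T := T) 0 := by
  have h0 : (fourierBasis (T := T)) 0 = fourierLp 2 0 := congrFun coe_fourierBasis 0
  rw [h0]
  apply Lp.ext
  filter_upwards [coeFn_one, coeFn_fourierLp (T := T) 2 0] with x h1 h2
  rw [h1, h2, fourier_zero]

lemma repr_one (n : ℤ) :
    fourierBasis.repr (oneL2 : L2) n = if n = 0 then 1 else 0 := by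
  rw [oneL2_eq, HilbertBasis.repr_self, lp.single_apply]
  split_ifs with h
  · subst h; rfl
  · exact Pi.single_eq_of_ne h _

lemma one_mem_H2 : oneL2 ∈ H2 := by
  intro n hn
  rw [repr_one, if_neg hn.ne]

lemma inner_one_left (f : L2) : ⟪(oneL2 : L2), f⟫ = fourierBasis.repr f 0 := by
  rw [fourierBasis_repr, inner_L2]
  unfold fourierCoeff
  refine integral_congr_ae ?_
  filter_upwards [coeFn_one] with x hx
  rw [hx]
  simp [smul_eq_mul]

lemma inner_one_right (f : L2) :
    ⟪f, (oneL2 : L2)⟫ = (starRingEnd ℂ) (fourierBasis.repr f 0) := by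
  rw [← inner_one_left, ← inner_conj_symm]

lemma inner_eq_zero_of_repr {w h : L2}
    (hw : ∀ n : ℤ, 0 ≤ n → fourierBasis.repr w n = 0)
    (hh : ∀ n : ℤ, n < 0 → fourierBasis.repr h n = 0) :
    ⟪w, h⟫ = 0 := by
  rw [← LinearIsometryEquiv.inner_map_map fourierBasis.repr w h, lp.inner_eq_tsum]
  have hz : ∀ n : ℤ, (starRingEnd ℂ) (fourierBasis.repr w n) * fourierBasis.repr h n = 0 := by
    intro n
    rcases lt_or_ge n 0 with hn | hn
    · rw [hh n hn, mul_zero]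
    · rw [hw n hn, map_zero, zero_mul]
  simp only [RCLike.inner_apply]
  have hfun : (fun i : ℤ => fourierBasis.repr h i * (starRingEnd ℂ) (fourierBasis.repr w i))
      = fun _ => 0 := funext fun n => by rw [mul_comm]; exact hz n
  rw [hfun, tsum_zero]

namespace InnerData

variable (U : InnerData)

lemma coeFn_M (f : L2) :
    (U.M f : AddCircle T → ℂ) =ᵐ[μ] fun x => U.u x * (f : AddCircle T → ℂ) x :=
  coeFn_mulCLM _ _ _ f

lemma coeFn_Mc (f : L2) :
    (U.Mc f : AddCircle T → ℂ)
      =ᵐ[μ] fun x => (starRingEnd ℂ) (U.u x) * (f : AddCircle T → ℂ) x :=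
  coeFn_mulCLM _ _ _ f

lemma coeFn_toL2 : (U.toL2 : AddCircle T → ℂ) =ᵐ[μ] U.u :=
  MemLp.coeFn_toLp _

lemma repr_toL2 (n : ℤ) : fourierBasis.repr U.toL2 n = fourierCoeff U.u n := by
  rw [fourierBasis_repr]
  exact fourierCoeff_congr_ae U.coeFn_toL2 n

lemma toL2_mem_H2 : U.toL2 ∈ H2 := by
  intro n hn
  rw [U.repr_toL2]
  exact U.anal n hn

lemma M_one : U.M oneL2 = U.toL2 := by
  apply Lp.ext
  filter_upwards [U.coeFn_M oneL2, coeFn_one, U.coeFn_toL2] with x h1 h2 h3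
  rw [h1, h2, h3, mul_one]

lemma Mzbar_M (f : L2) : Mzbar (U.M f) = U.M (Mzbar f) := by
  apply Lp.ext
  filter_upwards [coeFn_Mzbar (U.M f), U.coeFn_M f, U.coeFn_M (Mzbar f), coeFn_Mzbar f]
    with x h1 h2 h3 h4
  rw [h1, h2, h3, h4]
  ring

lemma Mz_M (f : L2) : Mz (U.M f) = U.M (Mz f) := by
  apply Lp.ext
  filter_upwards [coeFn_Mz (U.M f), U.coeFn_M f, U.coeFn_M (Mz f), coeFn_Mz f]
    with x h1 h2 h3 h4
  rw [h1, h2, h3, h4]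
  ring

lemma M_inner (f g : L2) : ⟪U.M f, U.M g⟫ = ⟪f, g⟫ := by
  rw [inner_L2, inner_L2]
  refine integral_congr_ae ?_
  filter_upwards [U.coeFn_M f, U.coeFn_M g, U.unim] with x h1 h2 h3
  rw [h1, h2]
  have hc : (starRingEnd ℂ) (U.u x) * U.u x = 1 := by
    rw [mul_comm, Complex.mul_conj, Complex.normSq_eq_norm_sq, h3]
    norm_num
  calc (starRingEnd ℂ) (U.u x * (f : AddCircle T → ℂ) x) * (U.u x * (g : AddCircle T → ℂ) x)
      = ((starRingEnd ℂ) (U.u x) * U.u x)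
        * ((starRingEnd ℂ) ((f : AddCircle T → ℂ) x) * (g : AddCircle T → ℂ) x) := by
        rw [map_mul]; ring
    _ = (starRingEnd ℂ) ((f : AddCircle T → ℂ) x) * (g : AddCircle T → ℂ) x := by
        rw [hc, one_mul]

lemma inner_M_toL2 (h : L2) :
    ⟪U.M h, U.toL2⟫ = (starRingEnd ℂ) (fourierBasis.repr h 0) := by
  rw [← U.M_one, U.M_inner, inner_one_right]

lemma repr_Mc_one (n : ℤ) :
    fourierBasis.repr (U.Mc oneL2) n = (starRingEnd ℂ) (fourierCoeff U.u (-n)) := by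
  have h : (U.Mc oneL2 : AddCircle T → ℂ) =ᵐ[μ] fun x => (starRingEnd ℂ) (U.u x) := by
    filter_upwards [U.coeFn_Mc oneL2, coeFn_one] with x h1 h2
    rw [h1, h2, mul_one]
  rw [fourierBasis_repr, fourierCoeff_congr_ae h, fourierCoeff_conj]

lemma M_mem_H2 {h : L2} (hh : h ∈ H2) : U.M h ∈ H2 := by
  intro n hn
  rw [fourierBasis_repr]
  have hmeas : AEStronglyMeasurable (fun x : AddCircle T => fourier n x) μ :=
    (map_continuous (fourier (T := T) n)).aestronglyMeasurable
  have hbd : ∀ᵐ x ∂μ, ‖fourier n (x : AddCircle T)‖ ≤ 1 := by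
    filter_upwards with x; simp [Circle.norm_coe]
  set w : L2 := mulCLM _ hmeas hbd (U.Mc oneL2) with hwdef
  have hw1 : (w : AddCircle T → ℂ) =ᵐ[μ] fun x => fourier n x * (starRingEnd ℂ) (U.u x) := by
    filter_upwards [coeFn_mulCLM _ hmeas hbd (U.Mc oneL2), U.coeFn_Mc oneL2, coeFn_one]
      with x h1 h2 h3
    rw [h1, h2, h3, mul_one]
  have key : fourierCoeff ((U.M h : L2) : AddCircle T → ℂ) n = ⟪w, h⟫ := by
    rw [inner_L2, fourierCoeff_congr_ae (U.coeFn_M h)]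
    unfold fourierCoeff
    refine integral_congr_ae ?_
    filter_upwards [hw1] with x hx
    rw [hx]
    simp only [smul_eq_mul, map_mul, Complex.conj_conj]
    rw [← fourier_neg]
    ring
  rw [key]
  refine inner_eq_zero_of_repr (fun m hm => ?_) (fun m hm => hh m hm)
  rw [fourierBasis_repr, fourierCoeff_congr_ae hw1, fourierCoeff_fourier_mul,
    fourierCoeff_conj]
  rw [U.anal (-(m - n)) (by omega), map_zero]

lemma repr_M_zero {h : L2} (hh : h ∈ H2) :
    fourierBasis.repr (U.M h) 0 = U.a0 * fourierBasis.repr h 0 := by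
  have key : fourierBasis.repr (U.M h) 0 = ⟪U.Mc oneL2, h⟫ := by
    rw [fourierBasis_repr, inner_L2, fourierCoeff_congr_ae (U.coeFn_M h)]
    unfold fourierCoeff
    refine integral_congr_ae ?_
    filter_upwards [U.coeFn_Mc oneL2, coeFn_one] with x h1 h2
    rw [h1, h2]
    simp only [smul_eq_mul, map_mul, Complex.conj_conj, neg_zero, fourier_zero, one_mul, mul_one]
  have hsplit : U.Mc oneL2
      = (U.Mc oneL2 - (starRingEnd ℂ) U.a0 • oneL2) + (starRingEnd ℂ) U.a0 • oneL2 := by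
    abel
  have hzero : ⟪U.Mc oneL2 - (starRingEnd ℂ) U.a0 • oneL2, h⟫ = 0 := by
    refine inner_eq_zero_of_repr (fun m hm => ?_) (fun m hm => hh m hm)
    rw [map_sub, _root_.map_smul, lp.coeFn_sub, Pi.sub_apply, lp.coeFn_smul, Pi.smul_apply,
      U.repr_Mc_one, repr_one, smul_eq_mul]
    rcases eq_or_lt_of_le hm with hm0 | hm0
    · rw [← hm0]
      simp [InnerData.a0]
    · rw [if_neg (by omega), U.anal (-m) (by omega), mul_zero, map_zero, sub_zero]
  rw [key]
  calc ⟪U.Mc oneL2, h⟫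
      = ⟪U.Mc oneL2 - (starRingEnd ℂ) U.a0 • oneL2, h⟫
        + ⟪(starRingEnd ℂ) U.a0 • oneL2, h⟫ := by
        rw [← inner_add_left, ← hsplit]
    _ = U.a0 * fourierBasis.repr h 0 := by
        rw [hzero, zero_add, inner_smul_left, inner_one_left, Complex.conj_conj]

lemma uH2_le_KP : U.uH2 ≤ U.KP := by
  intro v hv
  rw [InnerData.KP, Submodule.mem_orthogonal]
  intro w hw
  have hw2 : w ∈ (U.uH2)ᗮ := (Submodule.mem_inf.mp hw).2
  rw [← inner_conj_symm, (Submodule.mem_orthogonal _ _).mp hw2 v hv, map_zero]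

lemma toL2_mem_KP : U.toL2 ∈ U.KP :=
  U.uH2_le_KP ⟨oneL2, one_mem_H2, by rw [ContinuousLinearMap.coe_coe, U.M_one]⟩

lemma proj_KP_eq {x v : L2} (hv : v ∈ U.KP) (hxv : x - v ∈ U.Ku) :
    ((U.KP).orthogonalProjectionOnto x : L2) = v :=
  Submodule.eq_starProjection_of_mem_orthogonal hv ((U.Ku).le_orthogonal_orthogonal hxv)

lemma proj_Ku_eq {x v : L2} (hv : v ∈ U.Ku) (hxv : x - v ∈ U.KP) :
    ((U.Ku).orthogonalProjectionOnto x : L2) = v :=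
  Submodule.eq_starProjection_of_mem_orthogonal hv hxv

lemma inner_M_Mz {h w : L2} (hh : h ∈ H2) (hw : w ∈ U.Ku) :
    ⟪U.M h, Mz w⟫ = ⟪U.toL2, Mz w⟫ * (starRingEnd ℂ) (fourierBasis.repr h 0) := by
  set c0 : ℂ := fourierBasis.repr h 0 with hc0
  have hw2 : w ∈ (U.uH2)ᗮ := (Submodule.mem_inf.mp hw).2
  have hmem' : Mzbar (h - c0 • oneL2) ∈ H2 := by
    intro n hn
    rw [repr_Mzbar, map_sub, _root_.map_smul, lp.coeFn_sub, Pi.sub_apply, lp.coeFn_smul,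
      Pi.smul_apply, repr_one, smul_eq_mul]
    by_cases hn1 : n = -1
    · subst hn1; simp [← hc0]
    · rw [if_neg (by omega), hh (n + 1) (by omega), mul_zero, sub_zero]
  have hmem : U.M (Mzbar (h - c0 • oneL2)) ∈ U.uH2 :=
    ⟨Mzbar (h - c0 • oneL2), hmem', by rw [ContinuousLinearMap.coe_coe]⟩
  have h1 : ⟪U.M (h - c0 • oneL2), Mz w⟫ = 0 := by
    have e1 : ⟪U.M (h - c0 • oneL2), Mz w⟫ = ⟪Mzbar (U.M (h - c0 • oneL2)), w⟫ := by
      calc ⟪U.M (h - c0 • oneL2), Mz w⟫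
          = (starRingEnd ℂ) ⟪Mz w, U.M (h - c0 • oneL2)⟫ := (inner_conj_symm _ _).symm
        _ = (starRingEnd ℂ) ⟪w, Mzbar (U.M (h - c0 • oneL2))⟫ := by rw [Mz_inner]
        _ = ⟪Mzbar (U.M (h - c0 • oneL2)), w⟫ := inner_conj_symm _ _
    rw [e1, U.Mzbar_M]
    exact (Submodule.mem_orthogonal _ _).mp hw2 _ hmem
  calc ⟪U.M h, Mz w⟫
      = ⟪U.M (h - c0 • oneL2), Mz w⟫ + ⟪U.M (c0 • oneL2), Mz w⟫ := by
        rw [← inner_add_left, ← map_add, sub_add_cancel]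
    _ = (starRingEnd ℂ) c0 * ⟪U.M oneL2, Mz w⟫ := by
        rw [h1, zero_add, _root_.map_smul, inner_smul_left]
    _ = ⟪U.toL2, Mz w⟫ * (starRingEnd ℂ) c0 := by rw [U.M_one]; ring

lemma key_orth {w : L2} (hw : w ∈ U.Ku) :
    Mz w - ⟪U.toL2, Mz w⟫ • U.toL2 ∈ U.Ku := by
  refine Submodule.mem_inf.mpr ⟨?_, ?_⟩
  · exact Submodule.sub_mem _ (Mz_mem_H2 (Submodule.mem_inf.mp hw).1)
      (Submodule.smul_mem _ _ U.toL2_mem_H2)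
  · rw [Submodule.mem_orthogonal]
    intro v hv
    obtain ⟨h, hh, rfl⟩ := hv
    rw [ContinuousLinearMap.coe_coe, inner_sub_right, inner_smul_right,
      U.inner_M_Mz hh hw, U.inner_M_toL2]
    ring

lemma q_mem_Ku : Mzbar (U.toL2 - U.a0 • oneL2) ∈ U.Ku := by
  refine Submodule.mem_inf.mpr ⟨?_, ?_⟩
  · intro n hn
    rw [repr_Mzbar, map_sub, _root_.map_smul, lp.coeFn_sub, Pi.sub_apply, lp.coeFn_smul,
      Pi.smul_apply, U.repr_toL2, repr_one, smul_eq_mul]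
    by_cases hn1 : n = -1
    · subst hn1; simp [InnerData.a0]
    · rw [if_neg (by omega), U.anal (n + 1) (by omega), mul_zero, sub_zero]
  · rw [Submodule.mem_orthogonal]
    intro v hv
    obtain ⟨h, hh, rfl⟩ := hv
    rw [ContinuousLinearMap.coe_coe, ← Mz_inner, inner_sub_right, inner_smul_right, U.Mz_M]
    have e1 : ⟪U.M (Mz h), U.toL2⟫ = 0 := by
      rw [U.inner_M_toL2, repr_Mz, hh (0 - 1) (by omega), map_zero]
    have e2 : ⟪U.M (Mz h), (oneL2 : L2)⟫ = 0 := by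
      rw [inner_one_right, U.repr_M_zero (Mz_mem_H2 hh), repr_Mz,
        hh (0 - 1) (by omega), mul_zero, map_zero]
    rw [e1, e2, mul_zero, sub_zero]

lemma k0_mem_Ku : oneL2 - (starRingEnd ℂ) U.a0 • U.toL2 ∈ U.Ku := by
  refine Submodule.mem_inf.mpr ⟨?_, ?_⟩
  · exact Submodule.sub_mem _ one_mem_H2 (Submodule.smul_mem _ _ U.toL2_mem_H2)
  · rw [Submodule.mem_orthogonal]
    intro v hv
    obtain ⟨h, hh, rfl⟩ := hv
    rw [ContinuousLinearMap.coe_coe, inner_sub_right, inner_smul_right,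
      inner_one_right, U.repr_M_zero hh, U.inner_M_toL2, map_mul]
    ring

lemma proj_Ku_Mzbar {f : L2} (hf : f ∈ U.KP) :
    ((U.Ku).orthogonalProjectionOnto (Mzbar f) : L2)
      = ⟪U.toL2, f⟫ • Mzbar (U.toL2 - U.a0 • oneL2) := by
  refine U.proj_Ku_eq (Submodule.smul_mem _ _ U.q_mem_Ku) ?_
  rw [InnerData.KP, Submodule.mem_orthogonal]
  intro w hw
  rw [inner_sub_right, inner_smul_right]
  have h1 : ⟪w, Mzbar f⟫ = ⟪Mz w, f⟫ := (Mz_inner w f).symm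
  have h2 : ⟪Mz w, f⟫ = (starRingEnd ℂ) ⟪U.toL2, Mz w⟫ * ⟪U.toL2, f⟫ := by
    calc ⟪Mz w, f⟫
        = ⟪Mz w - ⟪U.toL2, Mz w⟫ • U.toL2, f⟫ + ⟪⟪U.toL2, Mz w⟫ • U.toL2, f⟫ := by
          rw [← inner_add_left, sub_add_cancel]
      _ = (starRingEnd ℂ) ⟪U.toL2, Mz w⟫ * ⟪U.toL2, f⟫ := by
          rw [(Submodule.mem_orthogonal _ _).mp hf _ (U.key_orth hw), zero_add,
            inner_smul_left]
  have h3 : ⟪w, Mzbar (U.toL2 - U.a0 • oneL2)⟫ = (starRingEnd ℂ) ⟪U.toL2, Mz w⟫ := by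
    rw [← Mz_inner, inner_sub_right, inner_smul_right, inner_one_right, repr_Mz,
      (Submodule.mem_inf.mp hw).1 (0 - 1) (by omega), map_zero, mul_zero, sub_zero,
      ← inner_conj_symm]
  rw [h1, h2, h3]
  ring

lemma Du_adjoint : ContinuousLinearMap.adjoint U.Du
    = (U.KP).orthogonalProjectionOnto ∘L Mzbar ∘L (U.KP).subtypeL := by
  unfold InnerData.Du
  rw [ContinuousLinearMap.adjoint_comp, ContinuousLinearMap.adjoint_comp,
    Submodule.adjoint_subtypeL, Submodule.adjoint_orthogonalProjectionOnto, Mz_adjoint]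
  rfl

end InnerData

/-- `D_u D_u^* = I − (1 − |u(0)|²)(u ⊗ u)` on `K_u^⊥`. -/
theorem Du_mul_adjoint (U : InnerData) (f : U.KP) :
    (U.Du ((ContinuousLinearMap.adjoint U.Du) f) : L2)
      = (f : L2) - ((1 - ‖U.a0‖ ^ 2 : ℝ) : ℂ) •
          ((inner ℂ U.toL2 (f : L2) : ℂ) • U.toL2) := by
  have hadj : ((ContinuousLinearMap.adjoint U.Du) f : L2)
      = ((U.KP).orthogonalProjectionOnto (Mzbar (f : L2)) : L2) := by
    rw [U.Du_adjoint]; rfl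
  have hDu : (U.Du ((ContinuousLinearMap.adjoint U.Du) f) : L2)
      = ((U.KP).orthogonalProjectionOnto (Mz (((ContinuousLinearMap.adjoint U.Du) f : L2))) : L2) :=
    rfl
  have hKP : ((U.KP).orthogonalProjectionOnto (Mzbar (f : L2)) : L2)
      = Mzbar (f : L2) - ((U.Ku).orthogonalProjectionOnto (Mzbar (f : L2)) : L2) := by
    have h := (U.Ku).starProjection_add_starProjection_orthogonal (Mzbar (f : L2))
    have h2 : (U.KP).orthogonalProjectionOnto (Mzbar (f : L2))
        = ((U.Ku)ᗮ).orthogonalProjectionOnto (Mzbar (f : L2)) := rfl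
    rw [h2]
    exact eq_sub_of_add_eq' h
  have hq := U.proj_Ku_Mzbar f.2
  have hMz : Mz ((ContinuousLinearMap.adjoint U.Du) f : L2)
      = (f : L2) - (inner ℂ U.toL2 (f : L2) : ℂ) • (U.toL2 - U.a0 • oneL2) := by
    rw [hadj, hKP, hq, map_sub, _root_.map_smul, Mz_Mzbar, Mz_Mzbar]
  have hPf : ((U.KP).orthogonalProjectionOnto (f : L2) : L2) = (f : L2) :=
    U.proj_KP_eq f.2 (by rw [sub_self]; exact (U.Ku).zero_mem)
  have hPu : ((U.KP).orthogonalProjectionOnto U.toL2 : L2) = U.toL2 :=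
    U.proj_KP_eq U.toL2_mem_KP (by rw [sub_self]; exact (U.Ku).zero_mem)
  have hP1 : ((U.KP).orthogonalProjectionOnto (oneL2 : L2) : L2)
      = (starRingEnd ℂ) U.a0 • U.toL2 :=
    U.proj_KP_eq (Submodule.smul_mem _ _ U.toL2_mem_KP) U.k0_mem_Ku
  rw [hDu, hMz, map_sub, _root_.map_smul, map_sub, _root_.map_smul]
  push_cast [Submodule.coe_sub, Submodule.coe_smul]
  rw [hPf, hPu, hP1]
  have ha : ((‖U.a0‖ : ℝ) : ℂ) ^ 2 = U.a0 * (starRingEnd ℂ) U.a0 := by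
    rw [Complex.mul_conj, Complex.normSq_eq_norm_sq]
    norm_cast
  rw [ha]
  module


end Paper
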